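/- For every n ≥ 2 and every k with 2 ≤ k ≤ n: (i) for every complete NFA with n states and every subset S of size k of the state set, if some word synchronizes S then the shortest such word has length at most 2^n − n − 2^{n−k}; and (ii) there exists a complete NFA with n states and a subset S of size k whose shortest synchronizing word has length exactly 2^n − n − 2^{n−k}. Hence the maximum synchronization length for state subsets of size k in complete NFAs with n states is 2^n − n − 2^{n−k}. -/
import Mathlib


/-- Action of an NFA transition function on a subset of states along a word. -/
def nfaRun {n m : ℕ} (δ : Fin n → Fin m → Finset (Fin n)) :
    Finset (Fin n) → List (Fin m) → Finset (Fin n)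
  | S, [] => S
  | S, a :: w => nfaRun δ (S.biUnion fun q => δ q a) w

/-- A word `w` synchronizes the subset `S` in the NFA `δ`. -/
def nfaSync {n m : ℕ} (δ : Fin n → Fin m → Finset (Fin n)) (S : Finset (Fin n))
    (w : List (Fin m)) : Prop :=
  (nfaRun δ S w).card = 1

/-- `l` is the length of a shortest word synchronizing `S` in the NFA `δ`. -/
def nfaShortestSync {n m : ℕ} (δ : Fin n → Fin m → Finset (Fin n)) (S : Finset (Fin n))
    (l : ℕ) : Prop :=
  (∃ w, nfaSync δ S w ∧ w.length = l) ∧ ∀ w, nfaSync δ S w → l ≤ w.length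

lemma nfaRun_append {n m : ℕ} (δ : Fin n → Fin m → Finset (Fin n))
    (S : Finset (Fin n)) (u v : List (Fin m)) :
    nfaRun δ S (u ++ v) = nfaRun δ (nfaRun δ S u) v := by
  induction u generalizing S with
  | nil => simp [nfaRun]
  | cons a u ih => simp only [List.cons_append, nfaRun]; exact ih _

lemma nfaRun_mono {n m : ℕ} (δ : Fin n → Fin m → Finset (Fin n))
    {S T : Finset (Fin n)} (h : S ⊆ T) (w : List (Fin m)) :
    nfaRun δ S w ⊆ nfaRun δ T w := by
  induction w generalizing S T with
  | nil => exact h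
  | cons a w ih =>
      simp only [nfaRun]
      exact ih (Finset.biUnion_subset_biUnion_of_subset_left _ h)

lemma nfaRun_nonempty {n m : ℕ} (δ : Fin n → Fin m → Finset (Fin n))
    (hδ : ∀ q a, (δ q a).Nonempty) {S : Finset (Fin n)} (hS : S.Nonempty)
    (w : List (Fin m)) : (nfaRun δ S w).Nonempty := by
  induction w generalizing S with
  | nil => exact hS
  | cons a w ih =>
      simp only [nfaRun]
      apply ih
      obtain ⟨q, hq⟩ := hS
      obtain ⟨x, hx⟩ := hδ q a
      exact ⟨x, Finset.mem_biUnion.2 ⟨q, hq, hx⟩⟩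

/-- Counting: 2^n = (n+1) + 2^(n-k) + #{T : 2 ≤ |T| ∧ ¬ S ⊆ T}. -/
lemma count_key {n k : ℕ} (hk : 2 ≤ k) (hkn : k ≤ n) (S : Finset (Fin n)) (hS : S.card = k) :
    2 ^ n = (n + 1) + 2 ^ (n - k) +
      (Finset.univ.filter (fun T : Finset (Fin n) => 2 ≤ T.card ∧ ¬ S ⊆ T)).card := by
  classical
  have h1 : (Finset.univ.filter (fun T : Finset (Fin n) => T.card ≤ 1)).card
      + (Finset.univ.filter (fun T : Finset (Fin n) => ¬ T.card ≤ 1)).card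
      = (Finset.univ : Finset (Finset (Fin n))).card :=
    Finset.card_filter_add_card_filter_not _
  have h2 : (Finset.univ.filter (fun T : Finset (Fin n) => ¬ T.card ≤ 1)).card
      = ((Finset.univ.filter (fun T : Finset (Fin n) => ¬ T.card ≤ 1)).filter
          (fun T => S ⊆ T)).card
      + ((Finset.univ.filter (fun T : Finset (Fin n) => ¬ T.card ≤ 1)).filter
          (fun T => ¬ S ⊆ T)).card :=
    (Finset.card_filter_add_card_filter_not _).symm
  have huniv : (Finset.univ : Finset (Finset (Fin n))).card = 2 ^ n := by
    rw [Finset.card_univ, Fintype.card_finset, Fintype.card_fin]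
  -- small sets
  have hsmall : (Finset.univ.filter (fun T : Finset (Fin n) => T.card ≤ 1)).card = n + 1 := by
    have : (Finset.univ.filter (fun T : Finset (Fin n) => T.card ≤ 1))
        = insert ∅ (Finset.univ.image (fun a : Fin n => ({a} : Finset (Fin n)))) := by
      ext T
      simp only [Finset.mem_filter, Finset.mem_univ, true_and, Finset.mem_insert,
        Finset.mem_image]
      constructor
      · intro h
        rcases Nat.le_one_iff_eq_zero_or_eq_one.1 h with h' | h'
        · exact Or.inl (Finset.card_eq_zero.1 h')
        · obtain ⟨a, ha⟩ := Finset.card_eq_one.1 h'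
          exact Or.inr ⟨a, ha.symm⟩
      · rintro (rfl | ⟨a, rfl⟩) <;> simp
    have hnm : (∅ : Finset (Fin n)) ∉
        (Finset.univ.image (fun a : Fin n => ({a} : Finset (Fin n)))) := by
      simp only [Finset.mem_image]
      rintro ⟨a, ha⟩
      exact Finset.singleton_ne_empty a ha.2
    rw [this, Finset.card_insert_of_notMem hnm, Finset.card_image_of_injective _
      Finset.singleton_injective, Finset.card_univ, Fintype.card_fin]
  -- supersets of S
  have hsup : ((Finset.univ.filter (fun T : Finset (Fin n) => ¬ T.card ≤ 1)).filter
      (fun T => S ⊆ T)).card = 2 ^ (n - k) := by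
    have heq : ((Finset.univ.filter (fun T : Finset (Fin n) => ¬ T.card ≤ 1)).filter
        (fun T => S ⊆ T)) = Finset.univ.filter (fun T : Finset (Fin n) => S ⊆ T) := by
      ext T
      simp only [Finset.mem_filter, Finset.mem_univ, true_and]
      constructor
      · tauto
      · intro h
        refine ⟨?_, h⟩
        have h3 := Finset.card_le_card h
        rw [hS] at h3
        omega
    rw [heq]
    have : (Sᶜ : Finset (Fin n)).powerset.card = 2 ^ (n - k) := by
      rw [Finset.card_powerset, Finset.card_compl, Fintype.card_fin, hS]
    rw [← this]
    apply Finset.card_bij' (fun T _ => T \ S) (fun T _ => T ∪ S)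
    · intro T hT
      simp only [Finset.mem_filter] at hT
      simp only [Finset.mem_powerset]
      intro x hx
      simp only [Finset.mem_sdiff] at hx
      simp [hx.2]
    · intro T hT
      simp only [Finset.mem_powerset] at hT
      simp only [Finset.mem_filter, Finset.mem_univ, true_and]
      exact Finset.subset_union_right
    · intro T hT
      simp only [Finset.mem_filter, Finset.mem_univ, true_and] at hT
      rw [Finset.sdiff_union_self_eq_union]
      exact (Finset.union_eq_left.2 hT)
    · intro T hT
      simp only [Finset.mem_powerset] at hT
      rw [Finset.union_sdiff_right]
      apply Finset.sdiff_eq_self_of_disjoint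
      exact Finset.disjoint_left.2 fun x hx h2 => by
        have := hT hx
        simp [Finset.mem_compl] at this
        exact this h2
  have hA : ((Finset.univ.filter (fun T : Finset (Fin n) => ¬ T.card ≤ 1)).filter
      (fun T => ¬ S ⊆ T))
      = Finset.univ.filter (fun T : Finset (Fin n) => 2 ≤ T.card ∧ ¬ S ⊆ T) := by
    ext T
    simp only [Finset.mem_filter, Finset.mem_univ, true_and]
    constructor
    · intro h; exact ⟨by omega, h.2⟩
    · intro h; exact ⟨by omega, h.2⟩
  rw [hA] at h2
  omega

lemma upper_bound {n k : ℕ} (hn : 2 ≤ n) (hk : 2 ≤ k) (hkn : k ≤ n)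
    (m : ℕ) (δ : Fin n → Fin m → Finset (Fin n)) (hδ : ∀ q a, (δ q a).Nonempty)
    (S : Finset (Fin n)) (hS : S.card = k) (hex : ∃ w, nfaSync δ S w) :
    ∃ w, nfaSync δ S w ∧ w.length ≤ 2 ^ n - n - 2 ^ (n - k) := by
  classical
  have hSne : S.Nonempty := Finset.card_pos.1 (by omega)
  have hexl : ∃ l, ∃ w : List (Fin m), nfaSync δ S w ∧ w.length = l := by
    obtain ⟨w, hw⟩ := hex
    exact ⟨w.length, w, hw, rfl⟩
  set L := Nat.find hexl with hL
  obtain ⟨w, hw, hwlen⟩ := Nat.find_spec hexl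
  have hmin : ∀ w' : List (Fin m), nfaSync δ S w' → L ≤ w'.length := by
    intro w' hw'
    exact Nat.find_le ⟨w', hw', rfl⟩
  refine ⟨w, hw, ?_⟩
  -- prefix configurations
  set C : ℕ → Finset (Fin n) := fun i => nfaRun δ S (w.take i) with hC
  have hrunfull : ∀ j ≤ L, nfaRun δ (C j) (w.drop j) = nfaRun δ S w := by
    intro j hj
    rw [hC]
    simp only
    rw [← nfaRun_append, List.take_append_drop]
  -- distinctness
  have hdist : ∀ i j, i < j → j ≤ L → C i ≠ C j := by
    intro i j hij hjL heq
    have h1 : nfaRun δ S (w.take i ++ w.drop j) = nfaRun δ S w := by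
      rw [nfaRun_append]
      have : nfaRun δ S (w.take i) = C i := rfl
      rw [this, heq]
      exact hrunfull j hjL
    have hsync : nfaSync δ S (w.take i ++ w.drop j) := by
      unfold nfaSync
      rw [h1]; exact hw
    have := hmin _ hsync
    rw [List.length_append, List.length_take, List.length_drop, hwlen] at this
    omega
  -- no prefix config contains S (for 1 ≤ i ≤ L)
  have hnsup : ∀ i, 1 ≤ i → i ≤ L → ¬ S ⊆ C i := by
    intro i h1 h2 hsub
    have hsub2 : nfaRun δ S (w.drop i) ⊆ nfaRun δ (C i) (w.drop i) :=
      nfaRun_mono δ hsub _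
    rw [hrunfull i h2] at hsub2
    obtain ⟨x, hx⟩ := Finset.card_eq_one.1 hw
    rw [hx] at hsub2
    have hne : (nfaRun δ S (w.drop i)).Nonempty := nfaRun_nonempty δ hδ hSne _
    rcases Finset.subset_singleton_iff.1 hsub2 with h | h
    · rw [h] at hne; exact absurd hne (by simp)
    · have hsync : nfaSync δ S (w.drop i) := by
        unfold nfaSync; rw [h]; simp
      have := hmin _ hsync
      rw [List.length_drop, hwlen] at this
      omega
  -- intermediate configs have card ≥ 2
  have hcard2 : ∀ i < L, 2 ≤ (C i).card := by
    intro i hi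
    have hne : (C i).Nonempty := nfaRun_nonempty δ hδ hSne _
    rcases Nat.lt_or_ge (C i).card 2 with h | h
    · have h1 : (C i).card = 1 := by
        have := Finset.card_pos.2 hne; omega
      have hsync : nfaSync δ S (w.take i) := h1
      have := hmin _ hsync
      rw [List.length_take, hwlen] at this
      omega
    · exact h
  -- inject Ico 1 L into the allowed sets
  set A := Finset.univ.filter (fun T : Finset (Fin n) => 2 ≤ T.card ∧ ¬ S ⊆ T) with hA
  have hinj : ∀ i ∈ Finset.Ico 1 L, C i ∈ A := by
    intro i hi
    rw [Finset.mem_Ico] at hi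
    rw [hA, Finset.mem_filter]
    exact ⟨Finset.mem_univ _, hcard2 i hi.2, hnsup i hi.1 (le_of_lt hi.2)⟩
  have hcardle : (Finset.Ico 1 L).card ≤ A.card := by
    apply Finset.card_le_card_of_injOn (fun i => C i) hinj
    intro i hi j hj hij
    rw [Finset.mem_coe, Finset.mem_Ico] at hi hj
    by_contra hne
    rcases Nat.lt_or_ge i j with h | h
    · exact hdist i j h (le_of_lt hj.2) hij
    · exact hdist j i (by omega) (le_of_lt hi.2) hij.symm
  rw [Nat.card_Ico] at hcardle
  have hcount := count_key hk hkn S hS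
  rw [← hA] at hcount
  rw [hwlen]
  omega

section Tight
variable {n k : ℕ}

lemma tight (hn : 2 ≤ n) (hk : 2 ≤ k) (hkn : k ≤ n)
    (S : Finset (Fin n)) (hS : S.card = k) :
    ∃ (δ : Fin n → Fin ((Finset.univ.filter
          (fun T : Finset (Fin n) => 2 ≤ T.card ∧ ¬ S ⊆ T)).card + 1) → Finset (Fin n)),
      (∀ q a, (δ q a).Nonempty) ∧
      nfaShortestSync δ S ((Finset.univ.filter
          (fun T : Finset (Fin n) => 2 ≤ T.card ∧ ¬ S ⊆ T)).card + 1) := by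
  classical
  set A := Finset.univ.filter (fun T : Finset (Fin n) => 2 ≤ T.card ∧ ¬ S ⊆ T) with hA
  set M := A.card with hM
  set N := M + 1 with hN
  have hNpos : 0 < N := by omega
  have hAprop : ∀ T ∈ A, 2 ≤ T.card ∧ ¬ S ⊆ T := by
    intro T hT; rw [hA, Finset.mem_filter] at hT; exact hT.2
  set le : Finset (Fin n) → Finset (Fin n) → Bool :=
    fun T T' => decide (T'.card ≤ T.card) with hle
  set l := A.toList.mergeSort le with hl
  have hperm : l.Perm A.toList := List.mergeSort_perm A.toList le
  have hlen : l.length = M := by rw [hperm.length_eq, Finset.length_toList]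
  have hmeml : ∀ x ∈ l, x ∈ A := fun x hx => Finset.mem_toList.1 (hperm.mem_iff.1 hx)
  have hnodup : l.Nodup := hperm.nodup_iff.2 (Finset.nodup_toList A)
  have hsorted : List.Pairwise (fun T T' : Finset (Fin n) => T'.card ≤ T.card) l := by
    have hp := List.pairwise_mergeSort (le := le)
      (fun a b c hab hbc => by
        simp only [hle, decide_eq_true_eq] at *; omega)
      (fun a b => by simp only [hle, Bool.or_eq_true, decide_eq_true_eq]; omega)
      A.toList
    rw [← hl] at hp
    exact hp.imp (fun h => by simpa [hle, decide_eq_true_eq] using h)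
  have htlt : (0 : ℕ) < n := by omega
  set t : Fin n := ⟨0, htlt⟩ with ht
  set seq : ℕ → Finset (Fin n) := fun i => if i = 0 then S else l.getD (i-1) {t} with hseq
  have hseq0 : seq 0 = S := by simp [hseq]
  have hseqmem : ∀ i, 1 ≤ i → i ≤ M → seq i ∈ A := by
    intro i h1 h2
    have hlt : i - 1 < l.length := by omega
    have : seq i = l[i-1] := by
      simp only [hseq, if_neg (by omega : ¬ i = 0)]
      exact List.getD_eq_getElem l {t} hlt
    rw [this]
    exact hmeml _ (List.getElem_mem hlt)
  have hseqtop : ∀ i, M < i → seq i = {t} := by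
    intro i hi
    simp only [hseq, if_neg (by omega : ¬ i = 0)]
    exact List.getD_eq_default l {t} (by omega)
  have hcard2 : ∀ i, i < N → 2 ≤ (seq i).card := by
    intro i hi
    rcases Nat.eq_zero_or_pos i with rfl | hpos
    · rw [hseq0, hS]; omega
    · exact (hAprop _ (hseqmem i hpos (by omega))).1
  have hne : ∀ i, (seq i).Nonempty := by
    intro i
    rcases Nat.lt_or_ge i N with h | h
    · exact Finset.card_pos.1 (by have := hcard2 i h; omega)
    · rw [hseqtop i (by omega)]; exact ⟨t, Finset.mem_singleton_self t⟩
  -- ordering: moves can never jump forward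
  have horder : ∀ j a : ℕ, j < N → a < N → seq j ⊆ seq a → a ≤ j := by
    intro j a hj ha hsub
    by_contra hcon
    push_neg at hcon
    have ha1 : 1 ≤ a := by omega
    rcases Nat.eq_zero_or_pos j with rfl | hj1
    · -- S ⊆ seq a with seq a ∈ A : contradiction
      rw [hseq0] at hsub
      exact (hAprop _ (hseqmem a ha1 (by omega))).2 hsub
    · have hja : j - 1 < a - 1 := by omega
      have hjl : j - 1 < l.length := by omega
      have hal : a - 1 < l.length := by omega
      have hgj : seq j = l.get ⟨j-1, hjl⟩ := by
        simp only [hseq, if_neg (by omega : ¬ j = 0)]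
        rw [List.getD_eq_getElem l {t} hjl]; rfl
      have hga : seq a = l.get ⟨a-1, hal⟩ := by
        simp only [hseq, if_neg (by omega : ¬ a = 0)]
        rw [List.getD_eq_getElem l {t} hal]; rfl
      have hcle : (seq a).card ≤ (seq j).card := by
        rw [hgj, hga]
        exact hsorted.rel_get_of_lt (by exact hja)
      have : seq j = seq a := Finset.eq_of_subset_of_card_le hsub hcle
      rw [hgj, hga] at this
      have := (hnodup.get_inj_iff).1 this
      simp only [Fin.mk.injEq] at this
      omega
  -- the automaton
  set δ : Fin n → Fin N → Finset (Fin n) :=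
    fun q a => if q ∈ seq a.val then seq (a.val + 1) else Finset.univ with hδ
  have huniv_ne : (Finset.univ : Finset (Fin n)).Nonempty := ⟨t, Finset.mem_univ t⟩
  have hcomplete : ∀ q a, (δ q a).Nonempty := by
    intro q a
    simp only [hδ]
    split_ifs
    · exact hne _
    · exact huniv_ne
  -- step lemma
  have hstep : ∀ (C : Finset (Fin n)), C.Nonempty → ∀ a : Fin N,
      (C.biUnion fun q => δ q a)
        = if C ⊆ seq a.val then seq (a.val + 1) else Finset.univ := by
    intro C hC a
    split_ifs with h
    · apply Finset.Subset.antisymm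
      · intro x hx
        obtain ⟨q, hq, hx⟩ := Finset.mem_biUnion.1 hx
        simp only [hδ, if_pos (h hq)] at hx
        exact hx
      · obtain ⟨q, hq⟩ := hC
        intro x hx
        exact Finset.mem_biUnion.2 ⟨q, hq, by simp only [hδ, if_pos (h hq)]; exact hx⟩
    · rw [Finset.not_subset] at h
      obtain ⟨q, hq, hq2⟩ := h
      apply Finset.Subset.antisymm (Finset.subset_univ _)
      intro x _
      exact Finset.mem_biUnion.2 ⟨q, hq, by simp only [hδ, if_neg hq2]; exact Finset.mem_univ x⟩
  have hcardu : (Finset.univ : Finset (Fin n)).card = n := by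
    rw [Finset.card_univ, Fintype.card_fin]
  -- seq never equals univ when k < n
  have hne_univ : k < n → ∀ i, seq i ≠ Finset.univ := by
    intro hklt i hEq
    rcases Nat.eq_zero_or_pos i with rfl | h1
    · rw [hseq0] at hEq
      have := hS
      rw [hEq, hcardu] at this
      omega
    · rcases Nat.lt_or_ge M i with h | h
      · rw [hseqtop i h] at hEq
        have : ({t} : Finset (Fin n)).card = n := by rw [hEq, hcardu]
        simp at this
        omega
      · exact (hAprop _ (hseqmem i h1 h)).2 (hEq ▸ Finset.subset_univ S)
  -- univ never synchronizes when k < n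
  have huniv_no : k < n → ∀ w : List (Fin N),
      (nfaRun δ (Finset.univ : Finset (Fin n)) w).card ≠ 1 := by
    intro hklt w
    induction w with
    | nil =>
        simp only [nfaRun, hcardu]; omega
    | cons a w ih =>
        simp only [nfaRun]
        rw [hstep _ huniv_ne a, if_neg]
        · exact ih
        · intro hsub
          exact hne_univ hklt a.val (Finset.Subset.antisymm (Finset.subset_univ _) hsub)
  -- lower bound
  have hLB : ∀ (w : List (Fin N)) (j : ℕ), (nfaRun δ (seq j) w).card = 1 → N - j ≤ w.length := by
    intro w
    induction w with
    | nil =>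
        intro j hj
        rcases Nat.lt_or_ge j N with h | h
        · have := hcard2 j h
          simp only [nfaRun] at hj
          omega
        · simp; omega
    | cons a w ih =>
        intro j hj
        rcases Nat.lt_or_ge j N with h | hge
        swap
        · simp only [List.length_cons]; omega
        simp only [nfaRun] at hj
        rw [hstep _ (hne j) a] at hj
        by_cases hsub : seq j ⊆ seq a.val
        · rw [if_pos hsub] at hj
          have hIH := ih (a.val + 1) hj
          have hle2 := horder j a.val h a.isLt hsub
          simp only [List.length_cons]
          omega
        · rw [if_neg hsub] at hj
          by_cases hkeq : k = n
          · have hSuniv : S = Finset.univ := by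
              apply Finset.eq_of_subset_of_card_le (Finset.subset_univ S)
              rw [hcardu, hS, hkeq]
            rw [← hSuniv, ← hseq0] at hj
            have hIH := ih 0 hj
            simp only [List.length_cons]
            omega
          · exact absurd hj (huniv_no (lt_of_le_of_ne hkn hkeq) w)
  -- the synchronizing word
  have hRUN : ∀ (c j : ℕ), j + c = N →
      nfaRun δ (seq j)
        ((List.range c).map (fun i => (⟨(j + i) % N, Nat.mod_lt _ hNpos⟩ : Fin N)))
      = seq N := by
    intro c
    induction c with
    | zero =>
        intro j hj
        have : j = N := by omega
        subst this
        simp [nfaRun]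
    | succ c ih =>
        intro j hj
        have hjN : j < N := by omega
        have hkey : ((seq j).biUnion fun q => δ q (⟨j, hjN⟩ : Fin N)) = seq (j+1) := by
          rw [hstep _ (hne j)]
          exact if_pos (Finset.Subset.refl (seq j))
        rw [List.range_succ_eq_map, List.map_cons, List.map_map]
        simp only [nfaRun]
        have hav : ((j + 0) % N) = j := by
          rw [Nat.add_zero, Nat.mod_eq_of_lt hjN]
        have hfun : ((fun i => (⟨(j + i) % N, Nat.mod_lt _ hNpos⟩ : Fin N)) ∘ Nat.succ)
            = fun i => (⟨((j+1) + i) % N, Nat.mod_lt _ hNpos⟩ : Fin N) := by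
          funext i
          apply Fin.ext
          simp only [Function.comp_apply]
          congr 1
          omega
        rw [hfun]
        have hletter : (⟨(j + 0) % N, Nat.mod_lt _ hNpos⟩ : Fin N) = (⟨j, hjN⟩ : Fin N) :=
          Fin.ext hav
        rw [hletter, hkey]
        exact ih (j+1) (by omega)
  have hseqN : seq N = {t} := hseqtop N (by omega)
  refine ⟨δ, hcomplete, ?_, ?_⟩
  · refine ⟨(List.range N).map (fun i => (⟨(0 + i) % N, Nat.mod_lt _ hNpos⟩ : Fin N)), ?_, by simp⟩
    unfold nfaSync
    rw [show S = seq 0 from hseq0.symm, hRUN N 0 (by omega), hseqN]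
    simp
  · intro w hw
    have := hLB w 0 (by rw [hseq0]; exact hw)
    omega
end Tight



theorem stmt4 (n k : ℕ) (hn : 2 ≤ n) (hk : 2 ≤ k) (hkn : k ≤ n) :
    -- (i) upper bound for every complete NFA and every subset of size k
    (∀ (m : ℕ) (δ : Fin n → Fin m → Finset (Fin n)),
      (∀ q a, (δ q a).Nonempty) →
      ∀ S : Finset (Fin n), S.card = k → (∃ w, nfaSync δ S w) →
        ∃ w, nfaSync δ S w ∧ w.length ≤ 2 ^ n - n - 2 ^ (n - k)) ∧
    -- (ii) the bound is attained
    (∃ (m : ℕ) (δ : Fin n → Fin m → Finset (Fin n)),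
      (∀ q a, (δ q a).Nonempty) ∧
      ∃ S : Finset (Fin n), S.card = k ∧
        nfaShortestSync δ S (2 ^ n - n - 2 ^ (n - k))) ∧
    -- hence: the maximum subset synchronization length is exactly the bound
    IsGreatest {l : ℕ | ∃ (m : ℕ) (δ : Fin n → Fin m → Finset (Fin n)),
        (∀ q a, (δ q a).Nonempty) ∧ ∃ S : Finset (Fin n), S.card = k ∧
          nfaShortestSync δ S l}
      (2 ^ n - n - 2 ^ (n - k)) := by
  classical
  have hub := fun m δ hδ S hS hex => upper_bound hn hk hkn m δ hδ S hS hex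
  have hattain : ∃ (m : ℕ) (δ : Fin n → Fin m → Finset (Fin n)),
      (∀ q a, (δ q a).Nonempty) ∧
      ∃ S : Finset (Fin n), S.card = k ∧
        nfaShortestSync δ S (2 ^ n - n - 2 ^ (n - k)) := by
    obtain ⟨S, -, hS⟩ := Finset.exists_subset_card_eq
      (show k ≤ (Finset.univ : Finset (Fin n)).card by
        rw [Finset.card_univ, Fintype.card_fin]; exact hkn)
    obtain ⟨δ, hcomp, hshort⟩ := tight hn hk hkn S hS
    have hcount := count_key hk hkn S hS
    have hBN : 2 ^ n - n - 2 ^ (n - k)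
        = (Finset.univ.filter
            (fun T : Finset (Fin n) => 2 ≤ T.card ∧ ¬ S ⊆ T)).card + 1 := by
      omega
    refine ⟨_, δ, hcomp, S, hS, ?_⟩
    rw [hBN]
    exact hshort
  refine ⟨hub, hattain, hattain, ?_⟩
  rintro l ⟨m, δ, hcomp, S, hS, hshort⟩
  obtain ⟨w, hw, hwle⟩ := hub m δ hcomp S hS ⟨hshort.1.choose, hshort.1.choose_spec.1⟩
  exact le_trans (hshort.2 w hw) hwle
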